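/- Let V be a metrizable locally convex real topological vector space. If the topological dual V*, equipped with the strong topology of uniform convergence on von Neumann bounded subsets of V, is metrizable, then V is normable, i.e., there exists a norm on V inducing its topology. -/

import Mathlib

open Set Filter Bornology Topology Pointwise

section Aux

variable {V : Type*} [AddCommGroup V] [Module ℝ V] [TopologicalSpace V]
  [IsTopologicalAddGroup V] [ContinuousSMul ℝ V]

theorem aux_closure {s : Set V} (hs : IsVonNBounded ℝ s) :
    IsVonNBounded ℝ (closure s) := by
  intro W hW
  obtain ⟨W', hW'mem, hW'closed, hW'sub⟩ := exists_mem_nhds_isClosed_subset hW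
  filter_upwards [(hs hW'mem).eventually, eventually_cobounded_le_norm (1 : ℝ)]
    with c hc hc1
  have hc0 : c ≠ 0 := fun h => by simp [h] at hc1; linarith
  calc closure s ⊆ closure (c • W') := closure_mono hc
    _ = c • W' := (hW'closed.smul_of_ne_zero hc0).closure_eq
    _ ⊆ (c • W : Set V) := smul_set_mono hW'sub

omit [IsTopologicalAddGroup V] in
theorem aux_convexHull [LocallyConvexSpace ℝ V] {s : Set V} (hs : IsVonNBounded ℝ s) :
    IsVonNBounded ℝ (convexHull ℝ s) := by
  intro W hW
  obtain ⟨C, ⟨hCmem, hCbal, hCconv⟩, hCW⟩ := (nhds_hasBasis_absConvex ℝ V).mem_iff.1 hW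
  filter_upwards [(hs hCmem).eventually] with c hc
  calc convexHull ℝ s ⊆ (c • C : Set V) := convexHull_min hc (hCconv.smul c)
    _ ⊆ (c • W : Set V) := smul_set_mono hCW

omit [IsTopologicalAddGroup V] in
theorem aux_balancedHull [LocallyConvexSpace ℝ V] {s : Set V} (hs : IsVonNBounded ℝ s) :
    IsVonNBounded ℝ (balancedHull ℝ s) := by
  intro W hW
  obtain ⟨C, ⟨hCmem, hCbal, hCconv⟩, hCW⟩ := (nhds_hasBasis_absConvex ℝ V).mem_iff.1 hW
  filter_upwards [(hs hCmem).eventually] with c hc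
  calc balancedHull ℝ s ⊆ (c • C : Set V) := (hCbal.smul c).balancedHull_subset_of_subset hc
    _ ⊆ (c • W : Set V) := smul_set_mono hCW

omit [IsTopologicalAddGroup V] [ContinuousSMul ℝ V] in
theorem aux_smul {s : Set V} (hs : IsVonNBounded ℝ s) {c : ℝ} (hc : 0 < c) :
    IsVonNBounded ℝ (c • s) := by
  intro W hW
  obtain ⟨r, hr⟩ := absorbs_iff_norm.1 (hs hW)
  refine absorbs_iff_norm.2 ⟨(|r| + 1) * c, fun b hb => ?_⟩
  have hb0 : b ≠ 0 := by
    intro h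
    rw [h, norm_zero] at hb
    nlinarith [abs_nonneg r]
  have hsub : s ⊆ (b / c) • W := by
    refine hr _ ?_
    rw [norm_div, Real.norm_of_nonneg hc.le, le_div_iff₀ hc]
    calc r * c ≤ (|r| + 1) * c := by nlinarith [le_abs_self r]
      _ ≤ ‖b‖ := hb
  calc c • s ⊆ c • ((b / c) • W) := smul_set_mono hsub
    _ = b • W := by rw [smul_smul]; rw [mul_div_cancel₀ _ (ne_of_gt hc)]

end Aux

theorem stmt7 (V : Type*)
    [AddCommGroup V] [Module ℝ V] [TopologicalSpace V] [IsTopologicalAddGroup V]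
    [ContinuousSMul ℝ V] [LocallyConvexSpace ℝ V] [TopologicalSpace.MetrizableSpace V]
    (hmetr : TopologicalSpace.MetrizableSpace (V →L[ℝ] ℝ)) :
    ∃ n : Seminorm ℝ V, (∀ x : V, n x = 0 → x = 0) ∧
      (nhds (0 : V)).HasBasis (fun ε : ℝ => 0 < ε) (fun ε => {x : V | n x < ε}) := by
  haveI := hmetr
  obtain ⟨U, hU⟩ := (nhds (0 : V)).exists_antitone_basis
  obtain ⟨W, hW⟩ := (nhds (0 : V →L[ℝ] ℝ)).exists_antitone_basis
  have hdual := ContinuousLinearMap.hasBasis_nhds_zero (σ := RingHom.id ℝ) (E := V) (F := ℝ)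
  -- choose bounded sets B k and ε k > 0 describing a basic neighborhood inside W k
  have hchoice : ∀ k : ℕ, ∃ (B : Set V) (ε : ℝ), IsVonNBounded ℝ B ∧ 0 < ε ∧
      {f : V →L[ℝ] ℝ | ∀ x ∈ B, |f x| < ε} ⊆ W k := by
    intro k
    obtain ⟨⟨B, O⟩, ⟨hB, hO⟩, hsub⟩ := hdual.mem_iff.1 (hW.1.mem_of_mem trivial)
    obtain ⟨ε, hε, hball⟩ := Metric.mem_nhds_iff.1 hO
    refine ⟨B, ε, hB, hε, fun f hf => hsub fun y hy => hball ?_⟩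
    simpa [Real.norm_eq_abs] using hf y hy
  choose B ε hBbdd hεpos hεsub using hchoice
  -- the closed absolutely convex hulls of the B k
  set C : ℕ → Set V := fun k => closure (convexHull ℝ (balancedHull ℝ (insert 0 (B k))))
    with hC
  have hCbdd : ∀ k, IsVonNBounded ℝ (C k) := fun k =>
    aux_closure (aux_convexHull (aux_balancedHull ((hBbdd k).insert 0)))
  have hCconv : ∀ k, Convex ℝ (C k) := fun k => (convex_convexHull ℝ _).closure
  have hCbal : ∀ k, Balanced ℝ (C k) := fun k =>
    ((balancedHull.balanced _).convexHull).closure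
  have hCsub : ∀ k, insert 0 (B k) ⊆ C k := fun k =>
    (subset_balancedHull ℝ).trans ((subset_convexHull ℝ _).trans subset_closure)
  have hCzero : ∀ k, (0 : V) ∈ C k := fun k => hCsub k (mem_insert 0 _)
  -- the key step: some U n is von Neumann bounded
  have hkey : ∃ n, IsVonNBounded ℝ (U n) := by
    by_contra hcon
    push_neg at hcon
    set m : ℕ → ℝ := fun k => max 1 (2 / ε k) with hm
    have hm1 : ∀ k, 1 ≤ m k := fun k => le_max_left _ _
    have hm0 : ∀ k, 0 < m k := fun k => lt_of_lt_of_le one_pos (hm1 k)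
    have hmε : ∀ k, 1 < ε k * m k := by
      intro k
      have h2 : 2 / ε k ≤ m k := le_max_right _ _
      have := (div_le_iff₀ (hεpos k)).1 h2
      nlinarith [hεpos k]
    have hx : ∀ k, ∃ y, y ∈ U k ∧ y ∉ m k • C k := by
      intro k
      by_contra h
      push_neg at h
      exact hcon k ((aux_smul (hCbdd k) (hm0 k)).subset fun y hy => h y hy)
    choose x hxU hxC using hx
    have htend : Tendsto x atTop (nhds (0 : V)) := hU.tendsto hxU
    have hSbdd := htend.isVonNBounded_range ℝ
    have hP : {f : V →L[ℝ] ℝ | ∀ y ∈ range x, f y ∈ Metric.closedBall (0:ℝ) 1} ∈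
        nhds (0 : V →L[ℝ] ℝ) :=
      hdual.mem_of_mem (i := (range x, Metric.closedBall (0:ℝ) 1)) ⟨hSbdd, Metric.closedBall_mem_nhds 0 one_pos⟩
    obtain ⟨k, -, hWk⟩ := hW.1.mem_iff.1 hP
    -- separate x k from m k • C k
    have hclosed : IsClosed (m k • C k) := isClosed_closure.smul_of_ne_zero (hm0 k).ne'
    obtain ⟨f, u, hfu, hufx⟩ :=
      geometric_hahn_banach_closed_point ((hCconv k).smul _) hclosed (hxC k)
    have hu0 : 0 < u := by
      have h0 : (0 : V) ∈ m k • C k := ⟨0, hCzero k, smul_zero _⟩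
      have := hfu 0 h0
      simpa using this
    have hfB : ∀ y ∈ B k, |f y| < u / m k := by
      intro y hy
      have hyC : y ∈ C k := hCsub k (mem_insert_of_mem _ hy)
      have h1 : f (m k • y) < u := hfu _ (smul_mem_smul_set hyC)
      have hnegy : -y ∈ C k := by
        have := (hCbal k).neg_mem_iff.2 hyC
        simpa using this
      have h2 : f (m k • (-y)) < u := hfu _ (smul_mem_smul_set hnegy)
      rw [map_smul, smul_eq_mul] at h1
      rw [map_smul, map_neg, smul_eq_mul, mul_neg] at h2
      rw [abs_lt]
      constructor
      · rw [neg_lt, lt_div_iff₀ (hm0 k)]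
        nlinarith
      · rw [lt_div_iff₀ (hm0 k)]
        nlinarith
    -- the contradiction
    set c : ℝ := ε k * m k / u with hc'
    have hcpos : 0 < c := div_pos (mul_pos (hεpos k) (hm0 k)) hu0
    have hg : (c • f : V →L[ℝ] ℝ) ∈ W k := by
      refine hεsub k ?_
      intro y hy
      have := hfB y hy
      simp only [ContinuousLinearMap.smul_apply, smul_eq_mul, abs_mul,
        abs_of_pos hcpos]
      calc c * |f y| < c * (u / m k) := by
            exact mul_lt_mul_of_pos_left this hcpos
        _ = ε k := by rw [hc']; field_simp [hu0.ne', (hm0 k).ne']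
    have hle : |c * f (x k)| ≤ 1 := by
      have := hWk hg (x k) (mem_range_self k)
      simpa [Real.norm_eq_abs, abs_mul, abs_of_pos hcpos] using this
    have hgt : (1 : ℝ) < c * f (x k) := by
      have h := mul_lt_mul_of_pos_left hufx hcpos
      have hcu : c * u = ε k * m k := by rw [hc']; field_simp [hu0.ne']
      nlinarith [hmε k]
    have h2 := le_abs_self (c * f (x k))
    linarith
  -- now build the norm from a bounded absolutely convex neighborhood of 0
  obtain ⟨n, hUn⟩ := hkey
  obtain ⟨D, ⟨hDmem, hDbal, hDconv⟩, hDsub⟩ :=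
    (nhds_hasBasis_absConvex ℝ V).mem_iff.1 (hU.1.mem_of_mem (i := n) trivial)
  have hDbdd : IsVonNBounded ℝ D := hUn.subset hDsub
  have hDabs : Absorbent ℝ D := absorbent_nhds_zero hDmem
  have hD0 : (0 : V) ∈ D := mem_of_mem_nhds hDmem
  refine ⟨gaugeSeminorm hDbal hDconv hDabs, ?_, ?_⟩
  · -- point-separating
    intro y hy
    have hy' : gauge D y = 0 := hy
    by_contra hy0
    have hO : ({y}ᶜ : Set V) ∈ nhds (0 : V) :=
      (isOpen_compl_singleton).mem_nhds (by simpa using Ne.symm hy0)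
    obtain ⟨O, ⟨hOmem, hObal, hOconv⟩, hOsub⟩ :=
      (nhds_hasBasis_absConvex ℝ V).mem_iff.1 hO
    obtain ⟨r, hr⟩ := absorbs_iff_norm.1 (hDbdd hOmem)
    set cc : ℝ := max r 1 with hcc
    have hcc1 : (1 : ℝ) ≤ cc := le_max_right _ _
    have hcc0 : (0 : ℝ) < cc := lt_of_lt_of_le one_pos hcc1
    have hDcc : D ⊆ cc • O := hr cc (by rw [Real.norm_of_nonneg hcc0.le]; exact le_max_left _ _)
    have hlt : gauge D y < 1 / cc := by rw [hy']; positivity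
    obtain ⟨b, hb0, hb1, hyb⟩ := exists_lt_of_gauge_lt hDabs hlt
    have hyO : y ∈ O := by
      have h1 : y ∈ (b * cc) • O := by
        rw [mul_smul]
        exact smul_set_mono hDcc hyb
      have h2 : ‖b * cc‖ ≤ 1 := by
        rw [Real.norm_of_nonneg (by positivity)]
        have : b * cc < (1 / cc) * cc := mul_lt_mul_of_pos_right hb1 hcc0
        have h1cc : (1 / cc) * cc = 1 := by field_simp
        linarith
      exact hObal _ h2 h1
    exact hOsub hyO rfl
  · -- the balls form a basis
    refine Filter.hasBasis_iff.2 fun t => ⟨fun ht => ?_, fun ⟨ε, hε, hsub⟩ => ?_⟩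
    · obtain ⟨r, hr⟩ := absorbs_iff_norm.1 (hDbdd ht)
      set cc : ℝ := max r 1 with hcc
      have hcc1 : (1 : ℝ) ≤ cc := le_max_right _ _
      have hcc0 : (0 : ℝ) < cc := lt_of_lt_of_le one_pos hcc1
      have hDcc : D ⊆ cc • t := hr cc (by rw [Real.norm_of_nonneg hcc0.le]; exact le_max_left _ _)
      refine ⟨1 / cc, by positivity, fun y hy => ?_⟩
      have hy' : gauge D y < 1 / cc := hy
      have hgauge : gauge D (cc • y) < 1 := by
        rw [gauge_smul_of_nonneg hcc0.le, smul_eq_mul]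
        calc cc * gauge D y < cc * (1 / cc) := mul_lt_mul_of_pos_left hy' hcc0
          _ = 1 := by field_simp
      have hyD : cc • y ∈ D := gauge_lt_one_subset_self hDconv hD0 hDabs hgauge
      exact (smul_mem_smul_set_iff₀ hcc0.ne' t y).1 (hDcc hyD)
    · refine mem_of_superset ((set_smul_mem_nhds_zero_iff
        (by positivity : (ε / 2 : ℝ) ≠ 0)).2 hDmem) ?_
      rintro y ⟨d, hd, rfl⟩
      refine hsub ?_
      show gauge D _ < ε
      rw [gauge_smul_of_nonneg (by positivity : (0:ℝ) ≤ ε / 2), smul_eq_mul]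
      calc ε / 2 * gauge D d ≤ ε / 2 * 1 :=
            mul_le_mul_of_nonneg_left (gauge_le_one_of_mem hd) (by positivity)
        _ < ε := by linarith
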